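/- Let k be a field and let I be an ideal of the polynomial ring k[x₁,…,xₙ] such that the quotient ring k[x₁,…,xₙ]/I is a finite-dimensional k-vector space. Then the zero locus of I in kⁿ, i.e. the set { p ∈ kⁿ : f(p) = 0 for every f ∈ I }, is a finite set. -/
import Mathlib


open MvPolynomial

/-- If the quotient `k[x₁,…,xₙ]/I` is a finite-dimensional `k`-vector space,
then the zero locus of `I` in `kⁿ` is finite. -/
theorem zeroLocus_finite_of_finiteDimensional_quotient
    {k : Type*} [Field k] {n : ℕ} (I : Ideal (MvPolynomial (Fin n) k))
    (h : FiniteDimensional k (MvPolynomial (Fin n) k ⧸ I)) :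
    {p : Fin n → k | ∀ f ∈ I, eval p f = 0}.Finite := by
  have hint : ∀ i : Fin n, ∃ q : Polynomial k, q ≠ 0 ∧
      Polynomial.aeval (X i : MvPolynomial (Fin n) k) q ∈ I := by
    intro i
    have hx : IsIntegral k (Ideal.Quotient.mk I (X i)) := IsIntegral.of_finite k _
    obtain ⟨q, hq, hq0⟩ := hx
    refine ⟨q, hq.ne_zero, ?_⟩
    rw [← Ideal.Quotient.eq_zero_iff_mem, ← Ideal.Quotient.mkₐ_eq_mk k,
      ← Polynomial.aeval_algHom_apply]
    simpa [Polynomial.aeval_def, Ideal.Quotient.mkₐ_eq_mk] using hq0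
  choose q hq0 hqI using hint
  have hsub : {p : Fin n → k | ∀ f ∈ I, eval p f = 0} ⊆
      Set.pi Set.univ (fun i => {a | (q i).IsRoot a}) := by
    intro p hp i _
    have hmem := hp _ (hqI i)
    have haev : ∀ g : MvPolynomial (Fin n) k, MvPolynomial.aeval p g = eval p g :=
      fun g => DFunLike.congr_fun (coe_aeval_eq_eval p) g
    have heval : Polynomial.aeval (p i) (q i)
        = MvPolynomial.aeval p (Polynomial.aeval (X i : MvPolynomial (Fin n) k) (q i)) := by
      have := Polynomial.aeval_algHom_apply (MvPolynomial.aeval p)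
        (X i : MvPolynomial (Fin n) k) (q i)
      simpa using this
    show (q i).IsRoot (p i)
    have : Polynomial.aeval (p i) (q i) = 0 := by
      rw [heval, haev, hmem]
    simpa [Polynomial.aeval_def, Polynomial.eval₂_eq_eval_map] using this
  exact (Set.Finite.pi (fun i => Polynomial.finite_setOf_isRoot (hq0 i))).subset hsub
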